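/- Suppose b⁺ ≥ (a⁺)² and b⁻ ≥ (a⁻)². Then for every K ∈ ℝⁿ one has β⁺(K) − (α⁺(K))² ≥ 0 and β⁻(K) − (α⁻(K))² ≥ 0. -/

import Mathlib

open MeasureTheory

/-- `α⁺(K) = ρ'E[P']K + E[a⁺(s+P'K)·1{s+P'K ≥ 0}] + E[a⁻(s+P'K)·1{s+P'K < 0}]`. -/
noncomputable def alphaPlus {Ω : Type*} [MeasurableSpace Ω] (ℙ : Measure Ω) {n : ℕ}
    (P : Ω → EuclideanSpace ℝ (Fin n)) (s ρ' ap am : ℝ)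
    (K : EuclideanSpace ℝ (Fin n)) : ℝ :=
  let pk : Ω → ℝ := fun ω => inner ℝ (P ω) K
  ρ' * (∫ ω, pk ω ∂ℙ) +
  (∫ ω, ap * (s + pk ω) * (if 0 ≤ s + pk ω then (1:ℝ) else 0) ∂ℙ) +
  (∫ ω, am * (s + pk ω) * (if s + pk ω < 0 then (1:ℝ) else 0) ∂ℙ)

/-- `α⁻(K) = ρ'E[P']K + E[a⁺(s+P'K)·1{s+P'K ≤ 0}] + E[a⁻(s+P'K)·1{s+P'K > 0}]`. -/
noncomputable def alphaMinus {Ω : Type*} [MeasurableSpace Ω] (ℙ : Measure Ω) {n : ℕ}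
    (P : Ω → EuclideanSpace ℝ (Fin n)) (s ρ' ap am : ℝ)
    (K : EuclideanSpace ℝ (Fin n)) : ℝ :=
  let pk : Ω → ℝ := fun ω => inner ℝ (P ω) K
  ρ' * (∫ ω, pk ω ∂ℙ) +
  (∫ ω, ap * (s + pk ω) * (if s + pk ω ≤ 0 then (1:ℝ) else 0) ∂ℙ) +
  (∫ ω, am * (s + pk ω) * (if 0 < s + pk ω then (1:ℝ) else 0) ∂ℙ)

/-- The piecewise-linear feedback policy `u = K⁺·Y·1{Y ≥ 0} + K⁻·Y·1{Y < 0}`. -/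
noncomputable def uPol {n : ℕ} (Y : ℝ) (Kp Km : EuclideanSpace ℝ (Fin n)) :
    EuclideanSpace ℝ (Fin n) :=
  (Y * (if 0 ≤ Y then (1:ℝ) else 0)) • Kp + (Y * (if Y < 0 then (1:ℝ) else 0)) • Km

/-- `β⁺(K) = ρ'²K'E[PP']K + 2ρ'E[a⁺(s+P'K)(P'K)·1{s+P'K ≥ 0}]
+ 2ρ'E[a⁻(s+P'K)(P'K)·1{s+P'K < 0}] + E[b⁺(s+P'K)²·1{s+P'K ≥ 0}]
+ E[b⁻(s+P'K)²·1{s+P'K < 0}]`, with `K'E[PP']K = E[(P'K)²]`. -/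
noncomputable def betaPlus {Ω : Type*} [MeasurableSpace Ω] (ℙ : Measure Ω) {n : ℕ}
    (P : Ω → EuclideanSpace ℝ (Fin n)) (s ρ' ap am bp bm : ℝ)
    (K : EuclideanSpace ℝ (Fin n)) : ℝ :=
  let pk : Ω → ℝ := fun ω => inner ℝ (P ω) K
  ρ' ^ 2 * (∫ ω, (pk ω) ^ 2 ∂ℙ) +
  2 * ρ' * (∫ ω, ap * (s + pk ω) * pk ω * (if 0 ≤ s + pk ω then (1:ℝ) else 0) ∂ℙ) +
  2 * ρ' * (∫ ω, am * (s + pk ω) * pk ω * (if s + pk ω < 0 then (1:ℝ) else 0) ∂ℙ) +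
  (∫ ω, bp * (s + pk ω) ^ 2 * (if 0 ≤ s + pk ω then (1:ℝ) else 0) ∂ℙ) +
  (∫ ω, bm * (s + pk ω) ^ 2 * (if s + pk ω < 0 then (1:ℝ) else 0) ∂ℙ)

/-- `β⁻(K) = ρ'²K'E[PP']K + 2ρ'E[a⁺(s+P'K)(P'K)·1{s+P'K ≤ 0}]
+ 2ρ'E[a⁻(s+P'K)(P'K)·1{s+P'K > 0}] + E[b⁺(s+P'K)²·1{s+P'K ≤ 0}]
+ E[b⁻(s+P'K)²·1{s+P'K > 0}]`, with `K'E[PP']K = E[(P'K)²]`. -/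
noncomputable def betaMinus {Ω : Type*} [MeasurableSpace Ω] (ℙ : Measure Ω) {n : ℕ}
    (P : Ω → EuclideanSpace ℝ (Fin n)) (s ρ' ap am bp bm : ℝ)
    (K : EuclideanSpace ℝ (Fin n)) : ℝ :=
  let pk : Ω → ℝ := fun ω => inner ℝ (P ω) K
  ρ' ^ 2 * (∫ ω, (pk ω) ^ 2 ∂ℙ) +
  2 * ρ' * (∫ ω, ap * (s + pk ω) * pk ω * (if s + pk ω ≤ 0 then (1:ℝ) else 0) ∂ℙ) +
  2 * ρ' * (∫ ω, am * (s + pk ω) * pk ω * (if 0 < s + pk ω then (1:ℝ) else 0) ∂ℙ) +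
  (∫ ω, bp * (s + pk ω) ^ 2 * (if s + pk ω ≤ 0 then (1:ℝ) else 0) ∂ℙ) +
  (∫ ω, bm * (s + pk ω) ^ 2 * (if 0 < s + pk ω then (1:ℝ) else 0) ∂ℙ)

open ProbabilityTheory in
private 
lemma key_ineq {Ω : Type*} [MeasurableSpace Ω] (μ : Measure Ω)
    [IsProbabilityMeasure μ] (f χ₁ χ₂ : Ω → ℝ)
    (hf : Measurable f) (hχ₁ : Measurable χ₁) (hχ₂ : Measurable χ₂)
    (hsum : ∀ ω, (χ₁ ω = 1 ∧ χ₂ ω = 0) ∨ (χ₁ ω = 0 ∧ χ₂ ω = 1))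
    (hfi : Integrable f μ) (hf2 : Integrable (fun ω => f ω ^ 2) μ)
    (s ρ' ap am bp bm : ℝ) (hbp : ap ^ 2 ≤ bp) (hbm : am ^ 2 ≤ bm) :
    0 ≤ (ρ' ^ 2 * (∫ ω, (f ω) ^ 2 ∂μ) +
      2 * ρ' * (∫ ω, ap * (s + f ω) * f ω * χ₁ ω ∂μ) +
      2 * ρ' * (∫ ω, am * (s + f ω) * f ω * χ₂ ω ∂μ) +
      (∫ ω, bp * (s + f ω) ^ 2 * χ₁ ω ∂μ) +
      (∫ ω, bm * (s + f ω) ^ 2 * χ₂ ω ∂μ)) -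
      (ρ' * (∫ ω, f ω ∂μ) + (∫ ω, ap * (s + f ω) * χ₁ ω ∂μ) +
       (∫ ω, am * (s + f ω) * χ₂ ω ∂μ)) ^ 2 := by
  set B : Ω → ℝ := fun ω => 1 + |f ω| + f ω ^ 2 with hBdef
  have hB : Integrable B μ := ((integrable_const 1).add hfi.abs).add hf2
  have hdom : ∀ (t : Ω → ℝ) (c : ℝ), Measurable t → (∀ ω, |t ω| ≤ c * B ω) →
      Integrable t μ := fun t c ht h =>
    (hB.const_mul c).mono' ht.aestronglyMeasurable
      (Filter.Eventually.of_forall fun ω => by simpa using h ω)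
  have hχab : ∀ ω, (0 ≤ χ₁ ω ∧ χ₁ ω ≤ 1) ∧ (0 ≤ χ₂ ω ∧ χ₂ ω ≤ 1) := by
    intro ω; rcases hsum ω with ⟨h1, h2⟩ | ⟨h1, h2⟩ <;> rw [h1, h2] <;> norm_num
  have hc1 : ∀ ω, |χ₁ ω| ≤ 1 := fun ω =>
    abs_le.2 ⟨by linarith [(hχab ω).1.1], (hχab ω).1.2⟩
  have hc2 : ∀ ω, |χ₂ ω| ≤ 1 := fun ω =>
    abs_le.2 ⟨by linarith [(hχab ω).2.1], (hχab ω).2.2⟩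
  have hBnn : ∀ ω, 0 ≤ B ω := fun ω => by simp only [hBdef]; positivity
  have hf1B : ∀ ω, 1 + |f ω| ≤ B ω := fun ω => by
    simp only [hBdef]; nlinarith [sq_nonneg (f ω)]
  have habsf : ∀ ω, |ap * (s + f ω)| ≤ (|ap| * (|s| + 1)) * (1 + |f ω|) := by
    intro ω
    have h1 : |ap * (s + f ω)| = |ap| * |s + f ω| := abs_mul _ _
    have h2 : |s + f ω| ≤ |s| + |f ω| := abs_add_le _ _
    nlinarith [mul_le_mul_of_nonneg_left h2 (abs_nonneg ap),
      mul_nonneg (mul_nonneg (abs_nonneg ap) (abs_nonneg s)) (abs_nonneg (f ω)),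
      abs_nonneg ap]
  have habsm : ∀ ω, |am * (s + f ω)| ≤ (|am| * (|s| + 1)) * (1 + |f ω|) := by
    intro ω
    have h1 : |am * (s + f ω)| = |am| * |s + f ω| := abs_mul _ _
    have h2 : |s + f ω| ≤ |s| + |f ω| := abs_add_le _ _
    nlinarith [mul_le_mul_of_nonneg_left h2 (abs_nonneg am),
      mul_nonneg (mul_nonneg (abs_nonneg am) (abs_nonneg s)) (abs_nonneg (f ω)),
      abs_nonneg am]
  have hT2 : Integrable (fun ω => ap * (s + f ω) * χ₁ ω) μ := by
    refine hdom _ (|ap| * (|s| + 1)) (by fun_prop) fun ω => ?_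
    have h := habsf ω
    calc |ap * (s + f ω) * χ₁ ω| = |ap * (s + f ω)| * |χ₁ ω| := abs_mul _ _
      _ ≤ |ap * (s + f ω)| * 1 := mul_le_mul_of_nonneg_left (hc1 ω) (abs_nonneg _)
      _ = |ap * (s + f ω)| := mul_one _
      _ ≤ (|ap| * (|s| + 1)) * (1 + |f ω|) := h
      _ ≤ _ := mul_le_mul_of_nonneg_left (hf1B ω) (by positivity)
  have hT3 : Integrable (fun ω => am * (s + f ω) * χ₂ ω) μ := by
    refine hdom _ (|am| * (|s| + 1)) (by fun_prop) fun ω => ?_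
    have h := habsm ω
    calc |am * (s + f ω) * χ₂ ω| = |am * (s + f ω)| * |χ₂ ω| := abs_mul _ _
      _ ≤ |am * (s + f ω)| * 1 := mul_le_mul_of_nonneg_left (hc2 ω) (abs_nonneg _)
      _ = |am * (s + f ω)| := mul_one _
      _ ≤ (|am| * (|s| + 1)) * (1 + |f ω|) := h
      _ ≤ _ := mul_le_mul_of_nonneg_left (hf1B ω) (by positivity)
  have hT2' : Integrable (fun ω => ap * (s + f ω) * f ω * χ₁ ω) μ := by
    refine hdom _ (|ap| * (|s| + 1)) (by fun_prop) fun ω => ?_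
    have h := habsf ω
    have e : |ap * (s + f ω) * f ω * χ₁ ω| = |ap * (s + f ω)| * |f ω| * |χ₁ ω| := by
      rw [abs_mul, abs_mul]
    rw [e]
    have hC : (0:ℝ) ≤ |ap| * (|s| + 1) := by positivity
    calc |ap * (s + f ω)| * |f ω| * |χ₁ ω|
        ≤ |ap * (s + f ω)| * |f ω| * 1 :=
          mul_le_mul_of_nonneg_left (hc1 ω) (mul_nonneg (abs_nonneg _) (abs_nonneg _))
      _ = |ap * (s + f ω)| * |f ω| := mul_one _
      _ ≤ (|ap| * (|s| + 1) * (1 + |f ω|)) * |f ω| :=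
          mul_le_mul_of_nonneg_right h (abs_nonneg _)
      _ ≤ |ap| * (|s| + 1) * B ω := by
          simp only [hBdef]
          nlinarith [hC, sq_abs (f ω), abs_nonneg (f ω)]
  have hT3' : Integrable (fun ω => am * (s + f ω) * f ω * χ₂ ω) μ := by
    refine hdom _ (|am| * (|s| + 1)) (by fun_prop) fun ω => ?_
    have h := habsm ω
    have e : |am * (s + f ω) * f ω * χ₂ ω| = |am * (s + f ω)| * |f ω| * |χ₂ ω| := by
      rw [abs_mul, abs_mul]
    rw [e]
    have hC : (0:ℝ) ≤ |am| * (|s| + 1) := by positivity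
    calc |am * (s + f ω)| * |f ω| * |χ₂ ω|
        ≤ |am * (s + f ω)| * |f ω| * 1 :=
          mul_le_mul_of_nonneg_left (hc2 ω) (mul_nonneg (abs_nonneg _) (abs_nonneg _))
      _ = |am * (s + f ω)| * |f ω| := mul_one _
      _ ≤ (|am| * (|s| + 1) * (1 + |f ω|)) * |f ω| :=
          mul_le_mul_of_nonneg_right h (abs_nonneg _)
      _ ≤ |am| * (|s| + 1) * B ω := by
          simp only [hBdef]
          nlinarith [hC, sq_abs (f ω), abs_nonneg (f ω)]
  have hsqbound : ∀ ω, |(s + f ω) ^ 2| ≤ (2 * s ^ 2 + 2) * B ω := by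
    intro ω
    rw [abs_of_nonneg (sq_nonneg _)]
    simp only [hBdef]
    nlinarith [sq_nonneg (s - f ω), sq_nonneg (f ω), abs_nonneg (f ω), sq_nonneg s]
  have hQ1i : Integrable (fun ω => (s + f ω) ^ 2 * χ₁ ω) μ := by
    refine hdom _ (2 * s ^ 2 + 2) (by fun_prop) fun ω => ?_
    rw [abs_mul]
    calc |(s + f ω) ^ 2| * |χ₁ ω| ≤ |(s + f ω) ^ 2| * 1 :=
          mul_le_mul_of_nonneg_left (hc1 ω) (abs_nonneg _)
      _ = |(s + f ω) ^ 2| := mul_one _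
      _ ≤ _ := hsqbound ω
  have hQ2i : Integrable (fun ω => (s + f ω) ^ 2 * χ₂ ω) μ := by
    refine hdom _ (2 * s ^ 2 + 2) (by fun_prop) fun ω => ?_
    rw [abs_mul]
    calc |(s + f ω) ^ 2| * |χ₂ ω| ≤ |(s + f ω) ^ 2| * 1 :=
          mul_le_mul_of_nonneg_left (hc2 ω) (abs_nonneg _)
      _ = |(s + f ω) ^ 2| := mul_one _
      _ ≤ _ := hsqbound ω
  -- the function g
  set g : Ω → ℝ := fun ω => ρ' * f ω + ap * (s + f ω) * χ₁ ω + am * (s + f ω) * χ₂ ω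
    with hgdef
  have hgmeas : Measurable g := by fun_prop
  set M : ℝ := |ρ'| + |ap| * (|s| + 1) + |am| * (|s| + 1) with hMdef
  have hM : 0 ≤ M := by positivity
  have hgabs : ∀ ω, |g ω| ≤ M * (1 + |f ω|) := by
    intro ω
    have h1 : |g ω| ≤ |ρ' * f ω| + |ap * (s + f ω) * χ₁ ω| + |am * (s + f ω) * χ₂ ω| :=
      (abs_add_le _ _).trans (by gcongr; exact abs_add_le _ _)
    have h2 : |ρ' * f ω| = |ρ'| * |f ω| := abs_mul _ _
    have h3 : |ap * (s + f ω) * χ₁ ω| ≤ |ap| * (|s| + 1) * (1 + |f ω|) := by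
      rw [abs_mul]
      calc |ap * (s + f ω)| * |χ₁ ω| ≤ |ap * (s + f ω)| * 1 :=
            mul_le_mul_of_nonneg_left (hc1 ω) (abs_nonneg _)
        _ = |ap * (s + f ω)| := mul_one _
        _ ≤ _ := habsf ω
    have h4 : |am * (s + f ω) * χ₂ ω| ≤ |am| * (|s| + 1) * (1 + |f ω|) := by
      rw [abs_mul]
      calc |am * (s + f ω)| * |χ₂ ω| ≤ |am * (s + f ω)| * 1 :=
            mul_le_mul_of_nonneg_left (hc2 ω) (abs_nonneg _)
        _ = |am * (s + f ω)| := mul_one _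
        _ ≤ _ := habsm ω
    have := abs_nonneg (f ω); have := abs_nonneg ρ'
    have := abs_nonneg ap; have := abs_nonneg am; have := abs_nonneg s
    nlinarith
  have hg : Integrable g μ := by
    refine hdom _ M hgmeas fun ω => ?_
    exact (hgabs ω).trans (mul_le_mul_of_nonneg_left (hf1B ω) hM)
  have hg2 : Integrable (fun ω => g ω ^ 2) μ := by
    refine hdom _ (2 * M ^ 2) (by fun_prop) fun ω => ?_
    have h := hgabs ω
    have h0 : |g ω| ^ 2 = g ω ^ 2 := sq_abs _
    have := abs_nonneg (g ω); have := abs_nonneg (f ω)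
    have hsq : |f ω| ^ 2 = f ω ^ 2 := sq_abs _
    rw [abs_of_nonneg (sq_nonneg (g ω))]
    simp only [hBdef]
    nlinarith [mul_le_mul_of_nonneg_left h hM,
      mul_le_mul_of_nonneg_right h (abs_nonneg (g ω)), sq_nonneg (f ω)]
  -- the mean of g
  have hα : ∫ ω, g ω ∂μ = ρ' * (∫ ω, f ω ∂μ) + (∫ ω, ap * (s + f ω) * χ₁ ω ∂μ) +
      (∫ ω, am * (s + f ω) * χ₂ ω ∂μ) := by
    have e1 : ∫ ω, g ω ∂μ =
        (∫ ω, (ρ' * f ω + ap * (s + f ω) * χ₁ ω) ∂μ) +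
        ∫ ω, am * (s + f ω) * χ₂ ω ∂μ :=
      integral_add ((hfi.const_mul ρ').add hT2) hT3
    have e2 : (∫ ω, (ρ' * f ω + ap * (s + f ω) * χ₁ ω) ∂μ) =
        (∫ ω, ρ' * f ω ∂μ) + ∫ ω, ap * (s + f ω) * χ₁ ω ∂μ :=
      integral_add (hfi.const_mul ρ') hT2
    rw [e1, e2, integral_const_mul]
  -- the second moment of g
  have hptwise : ∀ ω, g ω ^ 2 =
      ρ' ^ 2 * f ω ^ 2 + 2 * ρ' * (ap * (s + f ω) * f ω * χ₁ ω) +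
      2 * ρ' * (am * (s + f ω) * f ω * χ₂ ω) +
      ap ^ 2 * ((s + f ω) ^ 2 * χ₁ ω) + am ^ 2 * ((s + f ω) ^ 2 * χ₂ ω) := by
    intro ω
    rcases hsum ω with ⟨h1, h2⟩ | ⟨h1, h2⟩ <;> simp only [hgdef, h1, h2] <;> ring
  have hβ : ∫ ω, g ω ^ 2 ∂μ =
      ρ' ^ 2 * (∫ ω, f ω ^ 2 ∂μ) +
      2 * ρ' * (∫ ω, ap * (s + f ω) * f ω * χ₁ ω ∂μ) +
      2 * ρ' * (∫ ω, am * (s + f ω) * f ω * χ₂ ω ∂μ) +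
      ap ^ 2 * (∫ ω, (s + f ω) ^ 2 * χ₁ ω ∂μ) +
      am ^ 2 * (∫ ω, (s + f ω) ^ 2 * χ₂ ω ∂μ) := by
    have i1 : Integrable (fun ω => ρ' ^ 2 * f ω ^ 2) μ := hf2.const_mul (ρ' ^ 2)
    have i2 : Integrable (fun ω => 2 * ρ' * (ap * (s + f ω) * f ω * χ₁ ω)) μ :=
      hT2'.const_mul (2 * ρ')
    have i3 : Integrable (fun ω => 2 * ρ' * (am * (s + f ω) * f ω * χ₂ ω)) μ :=
      hT3'.const_mul (2 * ρ')
    have i4 : Integrable (fun ω => ap ^ 2 * ((s + f ω) ^ 2 * χ₁ ω)) μ :=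
      hQ1i.const_mul (ap ^ 2)
    have i5 : Integrable (fun ω => am ^ 2 * ((s + f ω) ^ 2 * χ₂ ω)) μ :=
      hQ2i.const_mul (am ^ 2)
    have i12 : Integrable (fun ω => ρ' ^ 2 * f ω ^ 2 +
        2 * ρ' * (ap * (s + f ω) * f ω * χ₁ ω)) μ := i1.add i2
    have i123 : Integrable (fun ω => ρ' ^ 2 * f ω ^ 2 +
        2 * ρ' * (ap * (s + f ω) * f ω * χ₁ ω) +
        2 * ρ' * (am * (s + f ω) * f ω * χ₂ ω)) μ := i12.add i3
    have i1234 : Integrable (fun ω => ρ' ^ 2 * f ω ^ 2 +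
        2 * ρ' * (ap * (s + f ω) * f ω * χ₁ ω) +
        2 * ρ' * (am * (s + f ω) * f ω * χ₂ ω) +
        ap ^ 2 * ((s + f ω) ^ 2 * χ₁ ω)) μ := i123.add i4
    rw [integral_congr_ae (Filter.Eventually.of_forall hptwise),
      integral_add i1234 i5, integral_add i123 i4, integral_add i12 i3,
      integral_add i1 i2,
      integral_const_mul, integral_const_mul, integral_const_mul,
      integral_const_mul, integral_const_mul]
  -- rewrite the bp/bm integrals
  have hJ4 : (∫ ω, bp * (s + f ω) ^ 2 * χ₁ ω ∂μ) =
      bp * ∫ ω, (s + f ω) ^ 2 * χ₁ ω ∂μ := by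
    rw [← integral_const_mul]
    congr 1; funext ω; ring
  have hJ5 : (∫ ω, bm * (s + f ω) ^ 2 * χ₂ ω ∂μ) =
      bm * ∫ ω, (s + f ω) ^ 2 * χ₂ ω ∂μ := by
    rw [← integral_const_mul]
    congr 1; funext ω; ring
  have hQ1nn : 0 ≤ ∫ ω, (s + f ω) ^ 2 * χ₁ ω ∂μ :=
    integral_nonneg fun ω => mul_nonneg (sq_nonneg _) (hχab ω).1.1
  have hQ2nn : 0 ≤ ∫ ω, (s + f ω) ^ 2 * χ₂ ω ∂μ :=
    integral_nonneg fun ω => mul_nonneg (sq_nonneg _) (hχab ω).2.1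
  -- variance inequality
  have hmem : MemLp g 2 μ :=
    (memLp_two_iff_integrable_sq hgmeas.aestronglyMeasurable).2 hg2
  have hvar := variance_nonneg g μ
  rw [variance_eq_sub hmem] at hvar
  have hvar' : (∫ ω, g ω ∂μ) ^ 2 ≤ ∫ ω, g ω ^ 2 ∂μ := by
    simpa [Pi.pow_apply] using hvar
  rw [hJ4, hJ5, ← hα]
  nlinarith [mul_nonneg (sub_nonneg.2 hbp) hQ1nn, mul_nonneg (sub_nonneg.2 hbm) hQ2nn]

/-- If `b⁺ ≥ (a⁺)²` and `b⁻ ≥ (a⁻)²`, then for every `K ∈ ℝⁿ` one has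
`β⁺(K) − (α⁺(K))² ≥ 0` and `β⁻(K) − (α⁻(K))² ≥ 0`. -/
theorem beta_sub_alpha_sq_nonneg {Ω : Type*} [MeasurableSpace Ω] (ℙ : Measure Ω)
    [IsProbabilityMeasure ℙ] {n : ℕ} (hn : 1 ≤ n)
    (P : Ω → EuclideanSpace ℝ (Fin n)) (hmeas : Measurable P)
    (hL2 : Integrable (fun ω => ‖P ω‖ ^ 2) ℙ)
    (s ρ' ap am bp bm : ℝ) (hs : 0 < s) (hρ : 0 < ρ')
    (hbp : ap ^ 2 ≤ bp) (hbm : am ^ 2 ≤ bm) :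
    ∀ K : EuclideanSpace ℝ (Fin n),
      0 ≤ betaPlus ℙ P s ρ' ap am bp bm K - (alphaPlus ℙ P s ρ' ap am K) ^ 2 ∧
      0 ≤ betaMinus ℙ P s ρ' ap am bp bm K - (alphaMinus ℙ P s ρ' ap am K) ^ 2 := by
  intro K
  have hpk : Measurable fun ω => (inner ℝ (P ω) K : ℝ) :=
    Measurable.inner hmeas measurable_const
  have hbnd : Integrable (fun ω => 1 + ‖P ω‖ ^ 2) ℙ := (integrable_const 1).add hL2
  have hnormint : Integrable (fun ω => ‖P ω‖) ℙ :=
    hbnd.mono' hmeas.norm.aestronglyMeasurable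
      (Filter.Eventually.of_forall fun ω => by
        rw [Real.norm_eq_abs, abs_of_nonneg (norm_nonneg _)]
        nlinarith [norm_nonneg (P ω), sq_nonneg (‖P ω‖ - 1)])
  have hpki : Integrable (fun ω => (inner ℝ (P ω) K : ℝ)) ℙ :=
    (hnormint.const_mul ‖K‖).mono' hpk.aestronglyMeasurable
      (Filter.Eventually.of_forall fun ω => by
        rw [Real.norm_eq_abs]
        calc |(inner ℝ (P ω) K : ℝ)| ≤ ‖P ω‖ * ‖K‖ := abs_real_inner_le_norm _ _
          _ = ‖K‖ * ‖P ω‖ := mul_comm _ _)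
  have hpk2 : Integrable (fun ω => (inner ℝ (P ω) K : ℝ) ^ 2) ℙ :=
    (hL2.const_mul (‖K‖ ^ 2)).mono' (hpk.pow_const 2).aestronglyMeasurable
      (Filter.Eventually.of_forall fun ω => by
        rw [Real.norm_eq_abs, abs_of_nonneg (sq_nonneg _)]
        nlinarith [abs_real_inner_le_norm (P ω) K, sq_abs (inner ℝ (P ω) K : ℝ),
          abs_nonneg (inner ℝ (P ω) K : ℝ), norm_nonneg (P ω), norm_nonneg K])
  constructor
  · have hχ1 : Measurable fun ω => if 0 ≤ s + (inner ℝ (P ω) K : ℝ) then (1:ℝ) else 0 :=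
      Measurable.ite (measurableSet_le measurable_const (by fun_prop))
        measurable_const measurable_const
    have hχ2 : Measurable fun ω => if s + (inner ℝ (P ω) K : ℝ) < 0 then (1:ℝ) else 0 :=
      Measurable.ite (measurableSet_lt (by fun_prop) measurable_const)
        measurable_const measurable_const
    have hsum : ∀ ω, ((if 0 ≤ s + (inner ℝ (P ω) K : ℝ) then (1:ℝ) else 0) = 1 ∧
        (if s + (inner ℝ (P ω) K : ℝ) < 0 then (1:ℝ) else 0) = 0) ∨
        ((if 0 ≤ s + (inner ℝ (P ω) K : ℝ) then (1:ℝ) else 0) = 0 ∧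
        (if s + (inner ℝ (P ω) K : ℝ) < 0 then (1:ℝ) else 0) = 1) := by
      intro ω
      by_cases h : 0 ≤ s + (inner ℝ (P ω) K : ℝ)
      · exact Or.inl ⟨if_pos h, if_neg (not_lt.mpr h)⟩
      · exact Or.inr ⟨if_neg h, if_pos (not_le.mp h)⟩
    have := key_ineq ℙ (fun ω => (inner ℝ (P ω) K : ℝ))
      (fun ω => if 0 ≤ s + (inner ℝ (P ω) K : ℝ) then (1:ℝ) else 0)
      (fun ω => if s + (inner ℝ (P ω) K : ℝ) < 0 then (1:ℝ) else 0)
      hpk hχ1 hχ2 hsum hpki hpk2 s ρ' ap am bp bm hbp hbm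
    simpa only [betaPlus, alphaPlus] using this
  · have hχ1 : Measurable fun ω => if s + (inner ℝ (P ω) K : ℝ) ≤ 0 then (1:ℝ) else 0 :=
      Measurable.ite (measurableSet_le (by fun_prop) measurable_const)
        measurable_const measurable_const
    have hχ2 : Measurable fun ω => if 0 < s + (inner ℝ (P ω) K : ℝ) then (1:ℝ) else 0 :=
      Measurable.ite (measurableSet_lt measurable_const (by fun_prop))
        measurable_const measurable_const
    have hsum : ∀ ω, ((if s + (inner ℝ (P ω) K : ℝ) ≤ 0 then (1:ℝ) else 0) = 1 ∧
        (if 0 < s + (inner ℝ (P ω) K : ℝ) then (1:ℝ) else 0) = 0) ∨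
        ((if s + (inner ℝ (P ω) K : ℝ) ≤ 0 then (1:ℝ) else 0) = 0 ∧
        (if 0 < s + (inner ℝ (P ω) K : ℝ) then (1:ℝ) else 0) = 1) := by
      intro ω
      by_cases h : s + (inner ℝ (P ω) K : ℝ) ≤ 0
      · exact Or.inl ⟨if_pos h, if_neg (not_lt.mpr h)⟩
      · exact Or.inr ⟨if_neg h, if_pos (not_le.mp h)⟩
    have := key_ineq ℙ (fun ω => (inner ℝ (P ω) K : ℝ))
      (fun ω => if s + (inner ℝ (P ω) K : ℝ) ≤ 0 then (1:ℝ) else 0)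
      (fun ω => if 0 < s + (inner ℝ (P ω) K : ℝ) then (1:ℝ) else 0)
      hpk hχ1 hχ2 hsum hpki hpk2 s ρ' ap am bp bm hbp hbm
    simpa only [betaMinus, alphaMinus] using this
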